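/- Integral interpolation inequality (equation (3.5) in the proof of Lemma 3.1). Let 1 < p < 2, n ∈ {2,3,…}, and let B ⊂ ℝⁿ be a ball. Let X, Y : B → ℝⁿ be measurable with ∫_B |X|^p dx < ∞ and ∫_B |Y|^p dx < ∞, and adopt the convention that (|X|+|Y|)^{p−2}|X−Y|² := 0 at points where X = Y = 0. Then there exists C = C(p) > 0 such that ⨍_B |X − Y|^p dx ≤ C ⨍_B (|X| + |Y|)^{p−2} |X − Y|² dx + C ( ⨍_B (|X| + |Y|)^{p−2} |X − Y|² dx )^{p/2} ( ⨍_B |X|^p dx )^{(2−p)/2}. -/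

import Mathlib

open MeasureTheory Metric Set

noncomputable section

/-- Euclidean space `ℝⁿ`. -/
abbrev Euc (n : ℕ) := EuclideanSpace ℝ (Fin n)

lemma aux_add_rpow_le {u v q : ℝ} (hu : 0 ≤ u) (hv : 0 ≤ v) (hq : 0 ≤ q) :
    (u + v) ^ q ≤ 2 ^ q * (u ^ q + v ^ q) := by
  have h1 : u + v ≤ 2 * max u v := by
    rcases le_total u v with h | h
    · rw [max_eq_right h]; linarith
    · rw [max_eq_left h]; linarith
  have h2 : (u + v) ^ q ≤ (2 * max u v) ^ q :=
    Real.rpow_le_rpow (by positivity) h1 hq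
  have h3 : (2 * max u v) ^ q = 2 ^ q * (max u v) ^ q :=
    Real.mul_rpow (by norm_num) (le_max_of_le_left hu)
  have h4 : (max u v) ^ q ≤ u ^ q + v ^ q := by
    rcases max_cases u v with ⟨he, _⟩ | ⟨he, _⟩ <;> rw [he]
    · nlinarith [Real.rpow_nonneg hv q]
    · nlinarith [Real.rpow_nonneg hu q]
  calc (u+v)^q ≤ 2^q * (max u v)^q := h3 ▸ h2
    _ ≤ 2^q * (u^q + v^q) := by
        have : (0:ℝ) ≤ 2 ^ q := Real.rpow_nonneg (by norm_num) q
        nlinarith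

lemma aux_key_id {p : ℝ} (hp1 : 1 < p) (hp2 : p < 2) {a t : ℝ} (ht : 0 ≤ t) (hta : t ≤ a) :
    t ^ p = (a ^ (p-2) * t ^ 2) ^ (p/2) * a ^ (p*(2-p)/2) := by
  have ha : 0 ≤ a := ht.trans hta
  rcases eq_or_lt_of_le ha with ha0 | ha0
  · have ht0 : t = 0 := le_antisymm (hta.trans ha0.symm.le) ht
    rw [← ha0, ht0, Real.zero_rpow (by linarith), Real.zero_rpow (by intro h; linarith : p - 2 ≠ 0)]
    rw [zero_mul, Real.zero_rpow (by positivity : p/2 ≠ 0), zero_mul]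
  · have e1 : ((2:ℕ):ℝ) * (p/2) = p := by push_cast; ring
    have h1 : (a ^ (p-2) * t ^ 2) ^ (p/2) = a ^ ((p-2)*(p/2)) * t ^ p := by
      rw [Real.mul_rpow (Real.rpow_nonneg ha _) (by positivity),
        ← Real.rpow_mul ha, ← Real.rpow_natCast t 2, ← Real.rpow_mul ht, e1]
    have hone : a ^ ((p-2)*(p/2)) * a ^ (p*(2-p)/2) = 1 := by
      rw [← Real.rpow_add ha0]
      have : (p-2)*(p/2) + p*(2-p)/2 = 0 := by ring
      rw [this, Real.rpow_zero]
    rw [h1, mul_right_comm, hone, one_mul]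

lemma aux_g_le {p : ℝ} (hp1 : 1 < p) (hp2 : p < 2) {a t : ℝ} (ht : 0 ≤ t) (hta : t ≤ a) :
    a ^ (p-2) * t ^ 2 ≤ a ^ p := by
  have ha : 0 ≤ a := ht.trans hta
  rcases eq_or_lt_of_le ha with ha0 | ha0
  · have ht0 : t = 0 := le_antisymm (hta.trans ha0.symm.le) ht
    rw [← ha0, ht0, Real.zero_rpow (by intro h; linarith : p - 2 ≠ 0)]
    simp [Real.zero_rpow (by positivity : p ≠ 0)]
  · have h1 : t ^ 2 ≤ a ^ 2 := by nlinarith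
    have h2 : a ^ (p-2) * t ^ 2 ≤ a ^ (p-2) * a ^ 2 :=
      mul_le_mul_of_nonneg_left h1 (Real.rpow_nonneg ha _)
    refine h2.trans_eq ?_
    rw [← Real.rpow_natCast a 2, ← Real.rpow_add ha0]
    norm_num

lemma aux_memℒp {α : Type*} [MeasurableSpace α] {μ : Measure α} {h : α → ℝ} {q : ℝ}
    (hq : 0 < q) (hm : AEStronglyMeasurable h μ) (hnn : ∀ x, 0 ≤ h x)
    (hi : Integrable (fun x => h x ^ q) μ) : MemLp h (ENNReal.ofReal q) μ := by
  have hq0 : ENNReal.ofReal q ≠ 0 := by simp [hq, hq.le, ENNReal.ofReal_eq_zero, not_le]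
  have hqt : ENNReal.ofReal q ≠ ⊤ := ENNReal.ofReal_ne_top
  have hiff := (memLp_norm_rpow_iff (p := ENNReal.ofReal q) hm hq0 hqt)
  rw [ENNReal.div_self hq0 hqt] at hiff
  refine hiff.mp ?_
  rw [memLp_one_iff_integrable]
  have he : (fun x => ‖h x‖ ^ (ENNReal.ofReal q).toReal) = fun x => h x ^ q := by
    funext x
    rw [Real.norm_of_nonneg (hnn x), ENNReal.toReal_ofReal hq.le]
  rw [he]
  exact hi

set_option maxHeartbeats 1000000 in
theorem integral_interpolation (p : ℝ) (hp1 : 1 < p) (hp2 : p < 2) :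
    ∃ C > (0 : ℝ), ∀ n : ℕ, 2 ≤ n → ∀ (x₀ : Euc n) (r : ℝ), 0 < r →
      ∀ X Y : Euc n → Euc n, Measurable X → Measurable Y →
        IntegrableOn (fun x => ‖X x‖ ^ p) (ball x₀ r) →
        IntegrableOn (fun x => ‖Y x‖ ^ p) (ball x₀ r) →
        ⨍ x in ball x₀ r, ‖X x - Y x‖ ^ p ≤
          C * (⨍ x in ball x₀ r, (‖X x‖ + ‖Y x‖) ^ (p - 2) * ‖X x - Y x‖ ^ 2)
            + C * (⨍ x in ball x₀ r, (‖X x‖ + ‖Y x‖) ^ (p - 2) * ‖X x - Y x‖ ^ 2) ^ (p / 2)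
              * (⨍ x in ball x₀ r, ‖X x‖ ^ p) ^ ((2 - p) / 2) := by
  have hp0 : (0:ℝ) < p := by linarith
  have h2p : (0:ℝ) < 2 - p := by linarith
  refine ⟨(2*8^p) ^ (2/p) + 2*8^p, by positivity, ?_⟩
  intro n hn x₀ r hr X Y hXm hYm hXi hYi
  set K : ℝ := 2 * 8 ^ p with hK
  have hKpos : 0 < K := by positivity
  set B := ball x₀ r with hBdef
  set ν : Measure (Euc n) := (volume B)⁻¹ • volume.restrict B with hν
  have hBpos : 0 < volume B := measure_ball_pos _ _ hr
  have hinv_ne_top : (volume B)⁻¹ ≠ ⊤ := by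
    simp [ENNReal.inv_ne_top, hBpos.ne']
  have havg : ∀ f : Euc n → ℝ, (⨍ x in B, f x) = ∫ x, f x ∂ν := fun f =>
    setAverage_eq' volume f B
  rw [havg, havg, havg]
  -- pointwise facts
  have hta : ∀ x, ‖X x - Y x‖ ≤ ‖X x‖ + ‖Y x‖ := fun x => norm_sub_le _ _
  have hYle : ∀ x, ‖Y x‖ ≤ ‖X x‖ + ‖X x - Y x‖ := by
    intro x
    have h := norm_sub_le (X x) (X x - Y x)
    simpa using h
  have ham : Measurable (fun x => ‖X x‖ + ‖Y x‖) := hXm.norm.add hYm.norm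
  have htm : Measurable (fun x => ‖X x - Y x‖) := (hXm.sub hYm).norm
  have hgm : Measurable (fun x => (‖X x‖ + ‖Y x‖) ^ (p-2) * ‖X x - Y x‖ ^ 2) :=
    (ham.pow measurable_const).mul (htm.pow_const 2)
  have hgnn : ∀ x, (0:ℝ) ≤ (‖X x‖ + ‖Y x‖) ^ (p-2) * ‖X x - Y x‖ ^ 2 := by
    intro x; positivity
  -- integrability over the restricted measure
  have hsumR : Integrable (fun x => (‖X x‖ + ‖Y x‖) ^ p) (volume.restrict B) := by
    refine Integrable.mono' ((hXi.add hYi).const_mul (2^p))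
      (ham.pow measurable_const).aestronglyMeasurable ?_
    refine ae_of_all _ fun x => ?_
    rw [Real.norm_of_nonneg (by positivity)]
    exact aux_add_rpow_le (norm_nonneg _) (norm_nonneg _) hp0.le
  have hgR : Integrable (fun x => (‖X x‖ + ‖Y x‖) ^ (p-2) * ‖X x - Y x‖ ^ 2)
      (volume.restrict B) := by
    refine Integrable.mono' hsumR hgm.aestronglyMeasurable ?_
    refine ae_of_all _ fun x => ?_
    rw [Real.norm_of_nonneg (hgnn x)]
    exact aux_g_le hp1 hp2 (norm_nonneg _) (hta x)
  have htR : Integrable (fun x => ‖X x - Y x‖ ^ p) (volume.restrict B) := by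
    refine Integrable.mono' hsumR
      (htm.pow measurable_const).aestronglyMeasurable ?_
    refine ae_of_all _ fun x => ?_
    rw [Real.norm_of_nonneg (by positivity)]
    exact Real.rpow_le_rpow (norm_nonneg _) (hta x) hp0.le
  -- integrability over ν
  have hsumN : Integrable (fun x => (‖X x‖ + ‖Y x‖) ^ p) ν := hsumR.smul_measure hinv_ne_top
  have hgN : Integrable (fun x => (‖X x‖ + ‖Y x‖) ^ (p-2) * ‖X x - Y x‖ ^ 2) ν :=
    hgR.smul_measure hinv_ne_top
  have htN : Integrable (fun x => ‖X x - Y x‖ ^ p) ν := htR.smul_measure hinv_ne_top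
  have hXN : Integrable (fun x => ‖X x‖ ^ p) ν := hXi.smul_measure hinv_ne_top
  -- abbreviations
  set A : ℝ := ∫ x, ‖X x - Y x‖ ^ p ∂ν with hA
  set G : ℝ := ∫ x, (‖X x‖ + ‖Y x‖) ^ (p-2) * ‖X x - Y x‖ ^ 2 ∂ν with hG
  set S : ℝ := ∫ x, ‖X x‖ ^ p ∂ν with hS
  set T : ℝ := ∫ x, (‖X x‖ + ‖Y x‖) ^ p ∂ν with hT
  have hAnn : 0 ≤ A := integral_nonneg fun x => by positivity
  have hGnn : 0 ≤ G := integral_nonneg fun x => hgnn x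
  have hSnn : 0 ≤ S := integral_nonneg fun x => by positivity
  have hTnn : 0 ≤ T := integral_nonneg fun x => by positivity
  have hGp : (0:ℝ) ≤ G ^ (p/2) := Real.rpow_nonneg hGnn _
  -- Hölder step
  have hpq : Real.HolderConjugate (2/p) (2/(2-p)) := by
    rw [Real.holderConjugate_iff]
    constructor
    · rw [lt_div_iff₀ hp0]; linarith
    · rw [inv_div, inv_div]; ring
  have hfmem : MemLp (fun x => ((‖X x‖ + ‖Y x‖) ^ (p-2) * ‖X x - Y x‖ ^ 2) ^ (p/2))
      (ENNReal.ofReal (2/p)) ν := by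
    refine aux_memℒp (by positivity) (hgm.pow measurable_const).aestronglyMeasurable
      (fun x => Real.rpow_nonneg (hgnn x) _) ?_
    have he : (fun x => (((‖X x‖ + ‖Y x‖) ^ (p-2) * ‖X x - Y x‖ ^ 2) ^ (p/2)) ^ (2/p))
        = fun x => (‖X x‖ + ‖Y x‖) ^ (p-2) * ‖X x - Y x‖ ^ 2 := by
      funext x
      rw [← Real.rpow_mul (hgnn x), show p/2*(2/p) = 1 by field_simp, Real.rpow_one]
    rw [he]
    exact hgN
  have hhmem : MemLp (fun x => (‖X x‖ + ‖Y x‖) ^ (p*(2-p)/2)) (ENNReal.ofReal (2/(2-p))) ν := by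
    refine aux_memℒp (by positivity) (ham.pow measurable_const).aestronglyMeasurable
      (fun x => Real.rpow_nonneg (by positivity) _) ?_
    have he : (fun x => ((‖X x‖ + ‖Y x‖) ^ (p*(2-p)/2)) ^ (2/(2-p)))
        = fun x => (‖X x‖ + ‖Y x‖) ^ p := by
      funext x
      rw [← Real.rpow_mul (by positivity),
        show p*(2-p)/2*(2/(2-p)) = p by field_simp]
    rw [he]
    exact hsumN
  have holder := integral_mul_le_Lp_mul_Lq_of_nonneg hpq
      (ae_of_all _ fun x => Real.rpow_nonneg (hgnn x) _)
      (ae_of_all _ fun x => Real.rpow_nonneg (by positivity) _) hfmem hhmem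
  rw [one_div_div, one_div_div] at holder
  have hprod : A = ∫ x, ((‖X x‖ + ‖Y x‖) ^ (p-2) * ‖X x - Y x‖ ^ 2) ^ (p/2)
      * (‖X x‖ + ‖Y x‖) ^ (p*(2-p)/2) ∂ν := by
    rw [hA]
    exact integral_congr_ae (ae_of_all _ fun x =>
      aux_key_id hp1 hp2 (norm_nonneg _) (hta x))
  have hint1 : ∫ x, (((‖X x‖ + ‖Y x‖) ^ (p-2) * ‖X x - Y x‖ ^ 2) ^ (p/2)) ^ (2/p) ∂ν = G := by
    rw [hG]
    exact integral_congr_ae (ae_of_all _ fun x => by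
      beta_reduce
      rw [← Real.rpow_mul (hgnn x), show p/2*(2/p) = 1 by field_simp, Real.rpow_one])
  have hint2 : ∫ x, ((‖X x‖ + ‖Y x‖) ^ (p*(2-p)/2)) ^ (2/(2-p)) ∂ν = T := by
    rw [hT]
    exact integral_congr_ae (ae_of_all _ fun x => by
      beta_reduce
      rw [← Real.rpow_mul (by positivity), show p*(2-p)/2*(2/(2-p)) = p by field_simp])
  rw [hint1, hint2, ← hprod] at holder
  -- holder : A ≤ G ^ (p/2) * T ^ ((2-p)/2)
  -- step 2 : T ≤ 8^p (S + A)
  have h28 : (2:ℝ) ≤ 2 ^ p := by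
    nth_rewrite 1 [show (2:ℝ) = 2 ^ (1:ℝ) by rw [Real.rpow_one]]
    exact Real.rpow_le_rpow_of_exponent_le one_le_two hp1.le
  have h44 : (2:ℝ)^p * 2^p = 4^p := by
    rw [← Real.mul_rpow (by norm_num) (by norm_num)]; norm_num
  have h48 : (2:ℝ)^p * 4^p = 8^p := by
    rw [← Real.mul_rpow (by norm_num) (by norm_num)]; norm_num
  have hpt : ∀ x, (‖X x‖ + ‖Y x‖) ^ p ≤ 8^p * (‖X x‖ ^ p + ‖X x - Y x‖ ^ p) := by
    intro x
    set u := ‖X x‖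
    set t := ‖X x - Y x‖
    have hu : (0:ℝ) ≤ u := norm_nonneg _
    have htn : (0:ℝ) ≤ t := norm_nonneg _
    have hb1 : (‖X x‖ + ‖Y x‖) ^ p ≤ (u + (u + t)) ^ p :=
      Real.rpow_le_rpow (by positivity) (by have := hYle x; linarith) hp0.le
    have hb2 : (u + (u + t)) ^ p ≤ 2^p * (u ^ p + (u + t) ^ p) :=
      aux_add_rpow_le hu (by positivity) hp0.le
    have hb3 : (u + t) ^ p ≤ 2^p * (u ^ p + t ^ p) := aux_add_rpow_le hu htn hp0.le
    have hnn2 : (0:ℝ) ≤ 2 ^ p := Real.rpow_nonneg (by norm_num) p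
    have hnn4 : (0:ℝ) ≤ 4 ^ p := Real.rpow_nonneg (by norm_num) p
    have hup : (0:ℝ) ≤ u ^ p := Real.rpow_nonneg hu p
    have htp : (0:ℝ) ≤ t ^ p := Real.rpow_nonneg htn p
    have hmul3 := mul_le_mul_of_nonneg_left hb3 hnn2
    have e : (2:ℝ)^p*(2^p*(u^p+t^p)) = 4^p*u^p + 4^p*t^p := by rw [← h44]; ring
    have h2le4 : (2:ℝ)^p ≤ 4^p := by nlinarith
    have h24le8 : (2:ℝ)^p + 4^p ≤ 8^p := by
      nlinarith [mul_le_mul_of_nonneg_right h28 hnn4]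
    have h4le8 : (4:ℝ)^p ≤ 8^p := by
      nlinarith [mul_le_mul_of_nonneg_right h28 hnn4]
    linarith [hb1, hb2, hmul3, e, mul_le_mul_of_nonneg_right h24le8 hup,
      mul_le_mul_of_nonneg_right h4le8 htp]
  have step2 : T ≤ 8^p * (S + A) := by
    have hmono := integral_mono hsumN ((hXN.add htN).const_mul (8^p)) hpt
    rw [integral_const_mul] at hmono
    simp only [Pi.add_apply] at hmono
    rwa [integral_add hXN htN] at hmono
  have hmono2 : T ^ ((2-p)/2) ≤ (8^p * (S+A)) ^ ((2-p)/2) :=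
    Real.rpow_le_rpow hTnn step2 (by linarith)
  have hsplit : (8^p * (S+A)) ^ ((2-p)/2) ≤ 8^p * (S+A)^((2-p)/2) := by
    rw [Real.mul_rpow (by positivity) (by linarith)]
    have h1 : ((8:ℝ)^p)^((2-p)/2) = 8 ^ (p*((2-p)/2)) := (Real.rpow_mul (by norm_num) _ _).symm
    have h2 : (8:ℝ) ^ (p*((2-p)/2)) ≤ 8 ^ p :=
      Real.rpow_le_rpow_of_exponent_le (by norm_num) (by nlinarith)
    exact mul_le_mul_of_nonneg_right (h1 ▸ h2)
      (Real.rpow_nonneg (by linarith) _)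
  have main2 : A ≤ 8^p * G^(p/2) * (S+A)^((2-p)/2) := by
    calc A ≤ G^(p/2) * T^((2-p)/2) := holder
    _ ≤ G^(p/2) * (8^p*(S+A))^((2-p)/2) := mul_le_mul_of_nonneg_left hmono2 hGp
    _ ≤ G^(p/2) * (8^p * (S+A)^((2-p)/2)) := mul_le_mul_of_nonneg_left hsplit hGp
    _ = 8^p * G^(p/2) * (S+A)^((2-p)/2) := by ring
  have hCsplit : K ≤ K^(2/p) + K := le_add_of_nonneg_left (Real.rpow_nonneg hKpos.le _)
  have hCK2 : K^(2/p) ≤ K^(2/p) + K := le_add_of_nonneg_right hKpos.le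
  have hSθ : (0:ℝ) ≤ S ^ ((2-p)/2) := Real.rpow_nonneg hSnn _
  rcases le_total A S with hAS | hSA
  · -- A ≤ S
    have h2S : (S+A)^((2-p)/2) ≤ 2 * S^((2-p)/2) := by
      calc (S+A)^((2-p)/2) ≤ (2*S)^((2-p)/2) :=
            Real.rpow_le_rpow (by linarith) (by linarith) (by linarith)
      _ = 2^((2-p)/2) * S^((2-p)/2) := Real.mul_rpow (by norm_num) hSnn
      _ ≤ 2 * S^((2-p)/2) := by
          have h1 : (2:ℝ)^((2-p)/2) ≤ 2^(1:ℝ) :=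
            Real.rpow_le_rpow_of_exponent_le one_le_two (by linarith)
          rw [Real.rpow_one] at h1
          exact mul_le_mul_of_nonneg_right h1 hSθ
    have hfin : A ≤ K * (G^(p/2) * S^((2-p)/2)) := by
      calc A ≤ 8^p * G^(p/2) * (S+A)^((2-p)/2) := main2
      _ ≤ 8^p * G^(p/2) * (2*S^((2-p)/2)) :=
          mul_le_mul_of_nonneg_left h2S (by positivity)
      _ = K * (G^(p/2)*S^((2-p)/2)) := by rw [hK]; ring
    have h1 : K * (G^(p/2) * S^((2-p)/2)) ≤ (K^(2/p)+K) * (G^(p/2) * S^((2-p)/2)) :=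
      mul_le_mul_of_nonneg_right hCsplit (by positivity)
    have h2 : (0:ℝ) ≤ (K^(2/p)+K) * G := by positivity
    calc A ≤ (K^(2/p)+K) * (G^(p/2) * S^((2-p)/2)) := hfin.trans h1
    _ ≤ (K^(2/p)+K) * G + (K^(2/p)+K) * G^(p/2) * S^((2-p)/2) := by nlinarith
  · -- S ≤ A
    rcases eq_or_lt_of_le hAnn with hA0 | hA0
    · rw [← hA0]; positivity
    · have h2A : (S+A)^((2-p)/2) ≤ 2 * A^((2-p)/2) := by
        calc (S+A)^((2-p)/2) ≤ (2*A)^((2-p)/2) :=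
              Real.rpow_le_rpow (by linarith) (by linarith) (by linarith)
        _ = 2^((2-p)/2) * A^((2-p)/2) := Real.mul_rpow (by norm_num) hAnn
        _ ≤ 2 * A^((2-p)/2) := by
            have h1 : (2:ℝ)^((2-p)/2) ≤ 2^(1:ℝ) :=
              Real.rpow_le_rpow_of_exponent_le one_le_two (by linarith)
            rw [Real.rpow_one] at h1
            exact mul_le_mul_of_nonneg_right h1 (Real.rpow_nonneg hAnn _)
      have hA8 : A ≤ K * G^(p/2) * A^((2-p)/2) := by
        calc A ≤ 8^p * G^(p/2) * (S+A)^((2-p)/2) := main2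
        _ ≤ 8^p * G^(p/2) * (2*A^((2-p)/2)) :=
            mul_le_mul_of_nonneg_left h2A (by positivity)
        _ = K * G^(p/2) * A^((2-p)/2) := by rw [hK]; ring
      have hsum1 : A ^ (p/2) * A^((2-p)/2) = A := by
        rw [← Real.rpow_add hA0, show p/2+(2-p)/2 = 1 by ring, Real.rpow_one]
      have hAθpos : 0 < A^((2-p)/2) := Real.rpow_pos_of_pos hA0 _
      have hcancel : A^(p/2) ≤ K * G^(p/2) := by
        have h3 : A ^ (p/2) * A^((2-p)/2) ≤ (K * G^(p/2)) * A^((2-p)/2) := by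
          rw [hsum1]; exact hA8
        exact le_of_mul_le_mul_right h3 hAθpos
      have h4 : (A^(p/2))^(2/p) ≤ (K*G^(p/2))^(2/p) :=
        Real.rpow_le_rpow (Real.rpow_nonneg hAnn _) hcancel (by positivity)
      rw [← Real.rpow_mul hAnn, show p/2*(2/p) = 1 by field_simp, Real.rpow_one,
        Real.mul_rpow hKpos.le hGp, ← Real.rpow_mul hGnn,
        show p/2*(2/p) = 1 by field_simp, Real.rpow_one] at h4
      have h5 : K^(2/p) * G ≤ (K^(2/p)+K) * G := mul_le_mul_of_nonneg_right hCK2 hGnn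
      have h6 : (0:ℝ) ≤ (K^(2/p)+K) * G^(p/2) * S^((2-p)/2) := by positivity
      calc A ≤ K^(2/p) * G := h4
      _ ≤ (K^(2/p)+K) * G := h5
      _ ≤ (K^(2/p)+K) * G + (K^(2/p)+K) * G^(p/2) * S^((2-p)/2) := by linarith
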